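/- Let X_s ⊂ ℝⁿ and B_* ⊂ ℝ^ν be nonempty convex compact sets. Let 𝕏 ⊆ S^n₊ × ℝ₊ and 𝕌 ⊆ S^ν₊ × ℝ₊ be sets such that: (i) (X,t) ∈ 𝕏 implies zᵀXz ≤ t for all z ∈ X_s, and (U,s') ∈ 𝕌 implies uᵀUu ≤ s' for all u ∈ B_*; (ii) 𝕏 contains a pair (X,t) with X positive definite, and 𝕌 contains a pair (U,s') with U positive definite; (iii) 𝕏 and 𝕌 are closed convex cones closed under increasing the scalar component. For M ∈ S^{ν+n} define 𝓜(M) = inf{ t + s' : (X,t) ∈ 𝕏, (U,s') ∈ 𝕌, Diag(U,X) ⪰ M }. Then 𝓜 is a real-valued convex function on S^{ν+n}, and for every M ∈ S^{ν+n}: 𝓜(M) ≥ max_{u∈B_*, z∈X_s} [u;z]ᵀ M [u;z]. -/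

import Mathlib

open Matrix

private lemma psd_smul {m : Type*} [Fintype m] {A : Matrix m m ℝ} (hA : A.PosSemidef)
    {c : ℝ} (hc : 0 ≤ c) : (c • A).PosSemidef := by
  refine PosSemidef.of_dotProduct_mulVec_nonneg ?_ (fun x => ?_)
  · rw [IsHermitian, conjTranspose_smul, hA.1]
    simp
  · rw [smul_mulVec, dotProduct_smul, smul_eq_mul]
    exact mul_nonneg hc (hA.dotProduct_mulVec_nonneg x)

private lemma quad_continuous {m : Type*} [Fintype m] (A : Matrix m m ℝ) :
    Continuous fun x : m → ℝ => x ⬝ᵥ A *ᵥ x := by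
  simp only [dotProduct, mulVec]
  fun_prop

private lemma exists_smul_sub_psd {m : Type*} [Fintype m] {D M : Matrix m m ℝ}
    (hD : D.PosDef) (hM : M.IsHermitian) : ∃ c : ℝ, 0 ≤ c ∧ (c • D - M).PosSemidef := by
  by_cases hS : (Metric.sphere (0 : m → ℝ) 1).Nonempty
  · obtain ⟨x₀, hx₀S, hmin⟩ :=
      (isCompact_sphere (0 : m → ℝ) 1).exists_isMinOn hS (quad_continuous D).continuousOn
    obtain ⟨x₁, hx₁S, hmax⟩ :=
      (isCompact_sphere (0 : m → ℝ) 1).exists_isMaxOn hS (quad_continuous M).continuousOn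
    set ε := x₀ ⬝ᵥ D *ᵥ x₀ with hεdef
    set K := x₁ ⬝ᵥ M *ᵥ x₁ with hKdef
    have hx₀ne : x₀ ≠ 0 := by
      intro h
      rw [Metric.mem_sphere, h] at hx₀S
      simp at hx₀S
    have hε : 0 < ε := by simpa using hD.dotProduct_mulVec_pos hx₀ne
    set c := max (K / ε) 0 with hcdef
    have hc0 : 0 ≤ c := le_max_right _ _
    have hKc : K ≤ c * ε := by
      calc K = (K / ε) * ε := (div_mul_cancel₀ _ hε.ne').symm
      _ ≤ c * ε := mul_le_mul_of_nonneg_right (le_max_left _ _) hε.le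
    refine ⟨c, hc0, PosSemidef.of_dotProduct_mulVec_nonneg ?_ (fun x => ?_)⟩
    · rw [IsHermitian, conjTranspose_sub, conjTranspose_smul, hD.1, hM]
      simp
    · rw [star_trivial, sub_mulVec, dotProduct_sub, smul_mulVec, dotProduct_smul,
        smul_eq_mul, sub_nonneg]
      by_cases hx : x = 0
      · simp [hx]
      · have hr : 0 < ‖x‖ := norm_pos_iff.mpr hx
        obtain ⟨y, hyS, hxy⟩ : ∃ y, y ∈ Metric.sphere (0 : m → ℝ) 1 ∧ x = ‖x‖ • y := by
          refine ⟨‖x‖⁻¹ • x, ?_, ?_⟩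
          · rw [mem_sphere_zero_iff_norm, norm_smul, norm_inv, norm_norm,
              inv_mul_cancel₀ hr.ne']
          · rw [smul_smul, mul_inv_cancel₀ hr.ne', one_smul]
        have hDq : x ⬝ᵥ D *ᵥ x = ‖x‖ ^ 2 * (y ⬝ᵥ D *ᵥ y) := by
          conv_lhs => rw [hxy]
          rw [mulVec_smul, dotProduct_smul, smul_dotProduct, smul_eq_mul, smul_eq_mul]
          ring
        have hMq : x ⬝ᵥ M *ᵥ x = ‖x‖ ^ 2 * (y ⬝ᵥ M *ᵥ y) := by
          conv_lhs => rw [hxy]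
          rw [mulVec_smul, dotProduct_smul, smul_dotProduct, smul_eq_mul, smul_eq_mul]
          ring
        have h1 : ε ≤ y ⬝ᵥ D *ᵥ y := isMinOn_iff.mp hmin y hyS
        have h2 : y ⬝ᵥ M *ᵥ y ≤ K := isMaxOn_iff.mp hmax y hyS
        have h3 : c * ε ≤ c * (y ⬝ᵥ D *ᵥ y) := mul_le_mul_of_nonneg_left h1 hc0
        rw [hDq, hMq]
        nlinarith [sq_nonneg ‖x‖]
  · have hall : ∀ x : m → ℝ, x = 0 := by
      intro x
      by_contra h
      exact hS ⟨‖x‖⁻¹ • x, by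
        rw [mem_sphere_zero_iff_norm, norm_smul, norm_inv, norm_norm,
          inv_mul_cancel₀ (norm_pos_iff.mpr h).ne']⟩
    refine ⟨0, le_refl _, PosSemidef.of_dotProduct_mulVec_nonneg ?_ (fun x => ?_)⟩
    · rw [IsHermitian, conjTranspose_sub, conjTranspose_smul, hD.1, hM]
      simp
    · rw [hall x]
      simp

private lemma fromBlocks_posDef {ν n : ℕ} {U : Matrix (Fin ν) (Fin ν) ℝ}
    {X : Matrix (Fin n) (Fin n) ℝ} (hU : U.PosDef) (hX : X.PosDef) :
    (fromBlocks U 0 0 X).PosDef := by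
  refine PosDef.of_dotProduct_mulVec_pos ?_ (fun ⦃x⦄ hx => ?_)
  · rw [IsHermitian, fromBlocks_conjTranspose, hU.1, hX.1]
    simp
  · have hxe : x = Sum.elim (x ∘ Sum.inl) (x ∘ Sum.inr) := by
      funext i; cases i <;> rfl
    rw [star_trivial, hxe, fromBlocks_mulVec, zero_mulVec, zero_mulVec, add_zero, zero_add,
      sumElim_dotProduct_sumElim]
    simp only [Sum.elim_comp_inl, Sum.elim_comp_inr]
    have hx' : x ∘ Sum.inl ≠ 0 ∨ x ∘ Sum.inr ≠ 0 := by
      by_contra h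
      push_neg at h
      apply hx
      funext i
      cases i with
      | inl i => exact congrFun h.1 i
      | inr i => exact congrFun h.2 i
    rcases hx' with h | h
    · have := hU.dotProduct_mulVec_pos h
      have h2 := hX.posSemidef.dotProduct_mulVec_nonneg (x ∘ Sum.inr)
      rw [star_trivial] at this h2
      linarith
    · have := hX.dotProduct_mulVec_pos h
      have h2 := hU.posSemidef.dotProduct_mulVec_nonneg (x ∘ Sum.inl)
      rw [star_trivial] at this h2
      linarith


/-- construction of the function `𝓜` from compatible cones:
with `𝕏`, `𝕌` compatible with `X_s` and `B_*` respectively,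
`𝓜(M) = inf{t + s' : (X,t) ∈ 𝕏, (U,s') ∈ 𝕌, Diag(U,X) ⪰ M}` is a real-valued
convex function on `S^{ν+n}` satisfying
`𝓜(M) ≥ max_{u ∈ B_*, z ∈ X_s} [u;z]ᵀ M [u;z]`. -/
theorem stmt9
    {n ν : ℕ}
    (Xs : Set (Fin n → ℝ)) (hXsne : Xs.Nonempty) (hXsconv : Convex ℝ Xs)
    (hXscomp : IsCompact Xs)
    (Bst : Set (Fin ν → ℝ)) (hBne : Bst.Nonempty) (hBconv : Convex ℝ Bst)
    (hBcomp : IsCompact Bst)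
    (𝕏 : Set (Matrix (Fin n) (Fin n) ℝ × ℝ))
    (𝕌 : Set (Matrix (Fin ν) (Fin ν) ℝ × ℝ))
    -- (i) bounding property, plus containment in S₊ × ℝ₊
    (h𝕏sub : ∀ p ∈ 𝕏, p.1.PosSemidef ∧ 0 ≤ p.2)
    (h𝕏bd : ∀ p ∈ 𝕏, ∀ z ∈ Xs, z ⬝ᵥ p.1.mulVec z ≤ p.2)
    (h𝕌sub : ∀ p ∈ 𝕌, p.1.PosSemidef ∧ 0 ≤ p.2)
    (h𝕌bd : ∀ p ∈ 𝕌, ∀ u ∈ Bst, u ⬝ᵥ p.1.mulVec u ≤ p.2)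
    -- (ii) existence of positive definite pairs
    (h𝕏pd : ∃ p ∈ 𝕏, p.1.PosDef) (h𝕌pd : ∃ p ∈ 𝕌, p.1.PosDef)
    -- (iii) closed convex cones, closed under increasing the scalar component
    (h𝕏cl : IsClosed 𝕏) (h𝕏cv : Convex ℝ 𝕏)
    (h𝕏cone : ∀ c : ℝ, 0 ≤ c → ∀ p ∈ 𝕏, (c • p.1, c * p.2) ∈ 𝕏)
    (h𝕏up : ∀ p ∈ 𝕏, ∀ t' : ℝ, p.2 ≤ t' → (p.1, t') ∈ 𝕏)
    (h𝕌cl : IsClosed 𝕌) (h𝕌cv : Convex ℝ 𝕌)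
    (h𝕌cone : ∀ c : ℝ, 0 ≤ c → ∀ p ∈ 𝕌, (c • p.1, c * p.2) ∈ 𝕌)
    (h𝕌up : ∀ p ∈ 𝕌, ∀ s' : ℝ, p.2 ≤ s' → (p.1, s') ∈ 𝕌)
    (𝓜 : Matrix (Fin ν ⊕ Fin n) (Fin ν ⊕ Fin n) ℝ → ℝ)
    (h𝓜 : ∀ M, 𝓜 M = sInf {c | ∃ X t U s',
        (X, t) ∈ 𝕏 ∧ (U, s') ∈ 𝕌 ∧
        (Matrix.fromBlocks U 0 0 X - M).PosSemidef ∧ c = t + s'}) :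
    (∀ M : Matrix (Fin ν ⊕ Fin n) (Fin ν ⊕ Fin n) ℝ, M.IsSymm →
        {c | ∃ X t U s', (X, t) ∈ 𝕏 ∧ (U, s') ∈ 𝕌 ∧
          (Matrix.fromBlocks U 0 0 X - M).PosSemidef ∧ c = t + s'}.Nonempty ∧
        BddBelow {c | ∃ X t U s', (X, t) ∈ 𝕏 ∧ (U, s') ∈ 𝕌 ∧
          (Matrix.fromBlocks U 0 0 X - M).PosSemidef ∧ c = t + s'}) ∧
    ConvexOn ℝ {M : Matrix (Fin ν ⊕ Fin n) (Fin ν ⊕ Fin n) ℝ | M.IsSymm} 𝓜 ∧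
    (∀ M : Matrix (Fin ν ⊕ Fin n) (Fin ν ⊕ Fin n) ℝ, M.IsSymm →
      ∀ u ∈ Bst, ∀ z ∈ Xs,
        Sum.elim u z ⬝ᵥ M.mulVec (Sum.elim u z) ≤ 𝓜 M) := by
  obtain ⟨⟨X₀, t₀⟩, hX₀mem, hX₀pd⟩ := h𝕏pd
  obtain ⟨⟨U₀, s₀⟩, hU₀mem, hU₀pd⟩ := h𝕌pd
  obtain ⟨z₀, hz₀⟩ := hXsne
  obtain ⟨u₀, hu₀⟩ := hBne
  -- lower bound lemma
  have lb : ∀ (M : Matrix (Fin ν ⊕ Fin n) (Fin ν ⊕ Fin n) ℝ), ∀ u ∈ Bst, ∀ z ∈ Xs,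
      ∀ c ∈ {c | ∃ X t U s', (X, t) ∈ 𝕏 ∧ (U, s') ∈ 𝕌 ∧
        (Matrix.fromBlocks U 0 0 X - M).PosSemidef ∧ c = t + s'},
      Sum.elim u z ⬝ᵥ M.mulVec (Sum.elim u z) ≤ c := by
    rintro M u hu z hz c ⟨X, t, U, s', hXt, hUs, hpsd, rfl⟩
    have h0 := hpsd.dotProduct_mulVec_nonneg (Sum.elim u z)
    rw [star_trivial, sub_mulVec, dotProduct_sub, fromBlocks_mulVec, zero_mulVec, add_zero,
      zero_mulVec, zero_add, sumElim_dotProduct_sumElim, sub_nonneg] at h0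
    simp only [Sum.elim_comp_inl, Sum.elim_comp_inr] at h0
    have h1 := h𝕌bd _ hUs u hu
    have h2 := h𝕏bd _ hXt z hz
    simp only at h1 h2
    linarith
  -- feasibility
  have feas : ∀ (M : Matrix (Fin ν ⊕ Fin n) (Fin ν ⊕ Fin n) ℝ), M.IsSymm →
      {c | ∃ X t U s', (X, t) ∈ 𝕏 ∧ (U, s') ∈ 𝕌 ∧
        (Matrix.fromBlocks U 0 0 X - M).PosSemidef ∧ c = t + s'}.Nonempty := by
    intro M hMs
    have hMh : M.IsHermitian := by
      rw [IsHermitian, conjTranspose_eq_transpose_of_trivial]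
      exact hMs
    obtain ⟨c, hc0, hpsd⟩ := exists_smul_sub_psd (fromBlocks_posDef hU₀pd hX₀pd) hMh
    refine ⟨c * t₀ + c * s₀, c • X₀, c * t₀, c • U₀, c * s₀,
      h𝕏cone c hc0 _ hX₀mem, h𝕌cone c hc0 _ hU₀mem, ?_, rfl⟩
    have heq : fromBlocks (c • U₀) (0 : Matrix (Fin ν) (Fin n) ℝ) 0 (c • X₀)
        = c • fromBlocks U₀ 0 0 X₀ := by
      rw [fromBlocks_smul]
      simp
    rw [heq]
    exact hpsd
  -- bddBelow
  have bdd : ∀ (M : Matrix (Fin ν ⊕ Fin n) (Fin ν ⊕ Fin n) ℝ),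
      BddBelow {c | ∃ X t U s', (X, t) ∈ 𝕏 ∧ (U, s') ∈ 𝕌 ∧
        (Matrix.fromBlocks U 0 0 X - M).PosSemidef ∧ c = t + s'} :=
    fun M => ⟨Sum.elim u₀ z₀ ⬝ᵥ M.mulVec (Sum.elim u₀ z₀),
      fun c hc => lb M u₀ hu₀ z₀ hz₀ c hc⟩
  refine ⟨fun M hM => ⟨feas M hM, bdd M⟩, ⟨?_, ?_⟩, ?_⟩
  · -- convexity of the domain
    intro M₁ h₁ M₂ h₂ a b ha hb hab
    show (a • M₁ + b • M₂).IsSymm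
    rw [Matrix.IsSymm, transpose_add, transpose_smul, transpose_smul, h₁, h₂]
  · -- convexity inequality
    intro M₁ h₁ M₂ h₂ a b ha hb hab
    simp only [smul_eq_mul]
    rw [h𝓜, h𝓜, h𝓜]
    refine le_of_forall_pos_le_add (fun ε hε => ?_)
    obtain ⟨c₁, hc₁mem, hc₁lt⟩ := exists_lt_of_csInf_lt (feas M₁ h₁)
      (lt_add_of_pos_right _ (half_pos hε))
    obtain ⟨c₂, hc₂mem, hc₂lt⟩ := exists_lt_of_csInf_lt (feas M₂ h₂)
      (lt_add_of_pos_right _ (half_pos hε))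
    obtain ⟨X₁, t₁, U₁, s₁, hX₁, hU₁, hp₁, rfl⟩ := hc₁mem
    obtain ⟨X₂, t₂, U₂, s₂, hX₂, hU₂, hp₂, rfl⟩ := hc₂mem
    have hXmem : (a • X₁ + b • X₂, a * t₁ + b * t₂) ∈ 𝕏 := by
      have := h𝕏cv hX₁ hX₂ ha hb hab
      simpa [Prod.smul_mk, Prod.mk_add_mk, smul_eq_mul] using this
    have hUmem : (a • U₁ + b • U₂, a * s₁ + b * s₂) ∈ 𝕌 := by
      have := h𝕌cv hU₁ hU₂ ha hb hab
      simpa [Prod.smul_mk, Prod.mk_add_mk, smul_eq_mul] using this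
    have heq : fromBlocks (a • U₁ + b • U₂) (0 : Matrix (Fin ν) (Fin n) ℝ) 0
          (a • X₁ + b • X₂) - (a • M₁ + b • M₂)
        = a • (fromBlocks U₁ 0 0 X₁ - M₁) + b • (fromBlocks U₂ 0 0 X₂ - M₂) := by
      ext i j
      rcases i with i | i <;> rcases j with j | j <;>
        simp [Matrix.sub_apply, Matrix.add_apply, Matrix.smul_apply, smul_eq_mul] <;> ring
    have hp3 : (fromBlocks (a • U₁ + b • U₂) (0 : Matrix (Fin ν) (Fin n) ℝ) 0
        (a • X₁ + b • X₂) - (a • M₁ + b • M₂)).PosSemidef := by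
      rw [heq]
      exact (psd_smul hp₁ ha).add (psd_smul hp₂ hb)
    have hmem3 : a * (t₁ + s₁) + b * (t₂ + s₂) ∈
        {c | ∃ X t U s', (X, t) ∈ 𝕏 ∧ (U, s') ∈ 𝕌 ∧
          (Matrix.fromBlocks U 0 0 X - (a • M₁ + b • M₂)).PosSemidef ∧ c = t + s'} :=
      ⟨a • X₁ + b • X₂, a * t₁ + b * t₂, a • U₁ + b • U₂, a * s₁ + b * s₂,
        hXmem, hUmem, hp3, by ring⟩
    have h3 : sInf {c | ∃ X t U s', (X, t) ∈ 𝕏 ∧ (U, s') ∈ 𝕌 ∧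
          (Matrix.fromBlocks U 0 0 X - (a • M₁ + b • M₂)).PosSemidef ∧ c = t + s'}
        ≤ a * (t₁ + s₁) + b * (t₂ + s₂) := csInf_le (bdd _) hmem3
    have e₁ := mul_le_mul_of_nonneg_left hc₁lt.le ha
    have e₂ := mul_le_mul_of_nonneg_left hc₂lt.le hb
    rw [mul_add] at e₁ e₂
    nlinarith [hε.le, hab]
  · -- lower bound on 𝓜
    intro M hM u hu z hz
    rw [h𝓜]
    exact le_csInf (feas M hM) (fun c hc => lb M u hu z hz c hc)
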